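/- Let G be a connected semi-regular bipartite multigraph with bipartition V₁ ∪ V₂, with |V(G)| ≥ 4 and whose underlying simple graph is not a star K_{1,n−1}. Then λ'(G) is well-defined and λ'(G) ≤ ξ(G). -/

import Mathlib

/-- A multigraph: multiple edges allowed (recorded as edge multiplicities), no loops. -/
structure Multigraph (V : Type*) where
  mult : V → V → ℕ
  symm : ∀ u v, mult u v = mult v u
  loopless : ∀ v, mult v v = 0

namespace Multigraph

variable {V : Type*}

/-- Adjacency: at least one edge between `u` and `v`. -/
def Adj (G : Multigraph V) (u v : V) : Prop := 0 < G.mult u v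

instance (G : Multigraph V) (v : V) : DecidablePred (G.Adj v) :=
  fun u => inferInstanceAs (Decidable (0 < G.mult v u))

/-- Reachability by walks. -/
def Reachable (G : Multigraph V) : V → V → Prop := Relation.ReflTransGen G.Adj

/-- A multigraph is connected if it is nonempty and every two vertices are joined by a walk. -/
def Connected (G : Multigraph V) : Prop := Nonempty V ∧ ∀ u v, G.Reachable u v

/-- An automorphism of a multigraph: a permutation preserving all edge multiplicities. -/
def Aut (G : Multigraph V) : Type _ :=
  {e : Equiv.Perm V // ∀ u v, G.mult (e u) (e v) = G.mult u v}

/-- A set of edges of `G`, given by sub-multiplicities. -/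
structure EdgeSub (G : Multigraph V) where
  f : V → V → ℕ
  symm : ∀ u v, f u v = f v u
  le : ∀ u v, f u v ≤ G.mult u v

/-- The multigraph obtained by deleting the edge set `F`. -/
def deleteEdges (G : Multigraph V) (F : G.EdgeSub) : Multigraph V where
  mult u v := G.mult u v - F.f u v
  symm u v := by try dsimp only
                 rw [G.symm u v, F.symm u v]
  loopless v := by simp [G.loopless v]

/-- `F` is an edge-cut if removing it disconnects `G`. -/
def IsEdgeCut (G : Multigraph V) (F : G.EdgeSub) : Prop := ¬ (G.deleteEdges F).Connected

/-- `F` is a restricted edge-cut if removing it disconnects `G` and leaves no isolated vertex. -/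
def IsRestrictedEdgeCut (G : Multigraph V) (F : G.EdgeSub) : Prop :=
  G.IsEdgeCut F ∧ ∀ v, ∃ u, (G.deleteEdges F).Adj v u

/-- `G` is bipartite with parts `V₁`, `V₂`. -/
def IsBipartition [DecidableEq V] [Fintype V] (G : Multigraph V) (V₁ V₂ : Finset V) : Prop :=
  Disjoint V₁ V₂ ∧ V₁ ∪ V₂ = Finset.univ ∧ ∀ u v, G.Adj u v → (u ∈ V₁ ↔ v ∈ V₂)

/-- A bipartite multigraph is half-transitive if `Aut G` is transitive on each part. -/
def IsHalfTransitive [DecidableEq V] [Fintype V] (G : Multigraph V) (V₁ V₂ : Finset V) : Prop :=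
  G.IsBipartition V₁ V₂ ∧
  (∀ u ∈ V₁, ∀ v ∈ V₁, ∃ e : G.Aut, e.1 u = v) ∧
  (∀ u ∈ V₂, ∀ v ∈ V₂, ∃ e : G.Aut, e.1 u = v)

/-- An imprimitive block for `Aut G`. -/
def IsImprimitiveBlock [DecidableEq V] (G : Multigraph V) (A : Finset V) [Fintype V] : Prop :=
  A.Nonempty ∧ A ≠ Finset.univ ∧
  ∀ e : G.Aut, A.image e.1 = A ∨ Disjoint (A.image e.1) A

/-- The induced sub-multigraph on a vertex set `S`. -/
def induce (G : Multigraph V) (S : Finset V) : Multigraph {x // x ∈ S} where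
  mult a b := G.mult a.1 b.1
  symm a b := G.symm a.1 b.1
  loopless a := G.loopless a.1

section Fin

variable [Fintype V] [DecidableEq V]

/-- The degree of a vertex (counting multiplicities). -/
def degree (G : Multigraph V) (v : V) : ℕ := ∑ u, G.mult v u

/-- The minimum degree `δ(G)`. -/
noncomputable def minDegree (G : Multigraph V) : ℕ := sInf {n | ∃ v, G.degree v = n}

/-- The maximum edge multiplicity `μ(G)`. -/
def maxMult (G : Multigraph V) : ℕ := Finset.univ.sup fun p : V × V => G.mult p.1 p.2

/-- `d(A)`: the number of edges between `A` and its complement. -/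
def cut (G : Multigraph V) (A : Finset V) : ℕ := ∑ u ∈ A, ∑ v ∈ Aᶜ, G.mult u v

/-- The number of edges in an edge set. -/
def EdgeSub.card {G : Multigraph V} (F : G.EdgeSub) : ℕ := (∑ u, ∑ v, F.f u v) / 2

/-- The edge-boundary `N(A)` of a vertex set `A`, as an edge set. -/
def boundary (G : Multigraph V) (A : Finset V) : G.EdgeSub where
  f u v := if (u ∈ A ∧ v ∉ A) ∨ (v ∈ A ∧ u ∉ A) then G.mult u v else 0
  symm u v := by
    try dsimp only
    by_cases h1 : u ∈ A <;> by_cases h2 : v ∈ A <;> simp [h1, h2, G.symm u v]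
  le u v := by (try dsimp only); split_ifs <;> simp

/-- The edge-connectivity `λ(G)`. -/
noncomputable def edgeConn (G : Multigraph V) : ℕ :=
  sInf {n | ∃ F : G.EdgeSub, G.IsEdgeCut F ∧ F.card = n}

/-- The restricted edge-connectivity `λ'(G)`. -/
noncomputable def rEdgeConn (G : Multigraph V) : ℕ :=
  sInf {n | ∃ F : G.EdgeSub, G.IsRestrictedEdgeCut F ∧ F.card = n}

/-- The minimum edge degree `ξ(G) = min {d(u)+d(v)-2μ(uv) : uv ∈ E}`. -/
noncomputable def minEdgeDegree (G : Multigraph V) : ℕ :=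
  sInf {n | ∃ u v, G.Adj u v ∧ n = G.degree u + G.degree v - 2 * G.mult u v}

/-- A `λ`-fragment: a vertex set whose edge-boundary is a minimum edge-cut. -/
def IsFragment (G : Multigraph V) (A : Finset V) : Prop :=
  A.Nonempty ∧ Aᶜ.Nonempty ∧ G.IsEdgeCut (G.boundary A) ∧ G.cut A = G.edgeConn

/-- A `λ`-atom: a `λ`-fragment of minimum cardinality. -/
def IsAtom (G : Multigraph V) (A : Finset V) : Prop :=
  G.IsFragment A ∧ ∀ B : Finset V, G.IsFragment B → A.card ≤ B.card

/-- A strict `λ`-fragment: a `λ`-fragment `C` with `2 ≤ |C| ≤ |V| - 2`. -/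
def IsStrictFragment (G : Multigraph V) (A : Finset V) : Prop :=
  G.IsFragment A ∧ 2 ≤ A.card ∧ A.card ≤ Fintype.card V - 2

/-- A `λ`-superatom: a strict `λ`-fragment of minimum cardinality. -/
def IsSuperAtom (G : Multigraph V) (A : Finset V) : Prop :=
  G.IsStrictFragment A ∧ ∀ B : Finset V, G.IsStrictFragment B → A.card ≤ B.card

/-- A `λ'`-fragment: a vertex set whose edge-boundary is a minimum restricted edge-cut. -/
def IsRFragment (G : Multigraph V) (A : Finset V) : Prop :=
  G.IsRestrictedEdgeCut (G.boundary A) ∧ G.cut A = G.rEdgeConn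

/-- A `λ'`-atom: a `λ'`-fragment of minimum cardinality. -/
def IsRAtom (G : Multigraph V) (A : Finset V) : Prop :=
  G.IsRFragment A ∧ ∀ B : Finset V, G.IsRFragment B → A.card ≤ B.card

/-- `G` is super edge-connected if every minimum edge-cut is the set of all edges
incident with some vertex. -/
def IsSuperEdgeConnected (G : Multigraph V) : Prop :=
  ∀ F : G.EdgeSub, G.IsEdgeCut F → F.card = G.edgeConn →
    ∃ v : V, ∀ u w : V, F.f u w = if u = v ∨ w = v then G.mult u w else 0

end Fin

end Multigraph

variable {V : Type*} [Fintype V] [DecidableEq V]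

open Multigraph

section Helper
open Finset

lemma aux_adj_delete (G : Multigraph V) (A : Finset V) (x y : V) :
    (G.deleteEdges (G.boundary A)).Adj x y ↔ G.Adj x y ∧ ((x ∈ A) ↔ (y ∈ A)) := by
  simp only [Multigraph.Adj, Multigraph.deleteEdges, Multigraph.boundary]
  by_cases hx : x ∈ A <;> by_cases hy : y ∈ A <;>
    simp [hx, hy, Nat.sub_self]

lemma aux_reach_delete (G : Multigraph V) (A : Finset V) {x y : V}
    (h : (G.deleteEdges (G.boundary A)).Reachable x y) : (x ∈ A ↔ y ∈ A) := by
  induction h with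
  | refl => rfl
  | tail _ hadj ih => exact ih.trans ((aux_adj_delete G A _ _).1 hadj).2

lemma aux_exists_adj (G : Multigraph V) (hG : G.Connected) (h2 : 2 ≤ Fintype.card V) (v : V) :
    ∃ u, G.Adj v u := by
  obtain ⟨w, hw⟩ := Fintype.exists_ne_of_one_lt_card (by omega) v
  rcases (Relation.ReflTransGen.cases_head (hG.2 v w)) with h | ⟨c, hc, -⟩
  · exact absurd h.symm hw
  · exact ⟨c, hc⟩

end Helper
section Helper2
open Finset

lemma aux_sum_cross (A : Finset V) (g : V → V → ℕ) :
    (∑ u, ∑ v, if u ∈ A ∧ v ∉ A then g u v else 0) = ∑ u ∈ A, ∑ v ∈ Aᶜ, g u v := by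
  have h : ∀ u, (∑ v, if u ∈ A ∧ v ∉ A then g u v else 0)
      = if u ∈ A then ∑ v ∈ Aᶜ, g u v else 0 := by
    intro u
    by_cases hu : u ∈ A
    · simp only [hu, true_and, if_pos]
      simp only [← Finset.mem_compl]
      rw [Finset.sum_ite_mem, Finset.univ_inter]
    · simp [hu]
  rw [Finset.sum_congr rfl fun u _ => h u, Finset.sum_ite_mem, Finset.univ_inter]

lemma aux_boundary_card (G : Multigraph V) (A : Finset V) :
    (G.boundary A).card = G.cut A := by
  have key : (∑ u, ∑ v, (G.boundary A).f u v) = G.cut A + G.cut A := by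
    have h1 : ∀ u v : V, (G.boundary A).f u v =
        (if u ∈ A ∧ v ∉ A then G.mult u v else 0)
          + (if v ∈ A ∧ u ∉ A then G.mult u v else 0) := by
      intro u v
      simp only [Multigraph.boundary]
      by_cases h1 : u ∈ A <;> by_cases h2 : v ∈ A <;> simp [h1, h2]
    calc (∑ u, ∑ v, (G.boundary A).f u v)
        = (∑ u, ∑ v, if u ∈ A ∧ v ∉ A then G.mult u v else 0)
          + (∑ u, ∑ v, if v ∈ A ∧ u ∉ A then G.mult u v else 0) := by
          simp only [h1, Finset.sum_add_distrib]
      _ = G.cut A + G.cut A := by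
          rw [aux_sum_cross]
          rw [Finset.sum_comm (f := fun u v => if v ∈ A ∧ u ∉ A then G.mult u v else 0)]
          rw [aux_sum_cross A (fun v u => G.mult u v)]
          congr 1
          exact Finset.sum_congr rfl fun u _ => Finset.sum_congr rfl fun v _ => G.symm _ _
  simp only [Multigraph.EdgeSub.card, key]
  omega

end Helper2
section Helper3
open Finset

lemma aux_pendant (G : Multigraph V) (V₁ V₂ : Finset V) (hdisj : Disjoint V₁ V₂)
    (hadj : ∀ a b, G.Adj a b → (a ∈ V₁ ↔ b ∈ V₂)) (u v w : V) (hv2 : v ∈ V₂) (hw2 : w ∈ V₂)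
    (h3 : ∀ x, G.Adj w x → x = u ∨ x = v) : ∀ z, z ≠ u → G.mult w z = 0 := by
  intro z hz
  by_contra h
  have hadjwz : G.Adj w z := Nat.pos_of_ne_zero h
  rcases h3 z hadjwz with rfl | rfl
  · exact hz rfl
  · exact absurd ((hadj w z hadjwz).2 hv2) (Finset.disjoint_right.1 hdisj hw2)

lemma aux_key (G : Multigraph V) (V₁ V₂ : Finset V) (d₁ d₂ : ℕ)
    (hbip : G.IsBipartition V₁ V₂)
    (hd1 : ∀ v ∈ V₁, G.degree v = d₁) (hd2 : ∀ v ∈ V₂, G.degree v = d₂)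
    (hG : G.Connected) (h4 : 4 ≤ Fintype.card V)
    (hstar : ¬ ∃ c : V, ∀ u v : V, G.Adj u v → u = c ∨ v = c)
    (u v : V) (hu1 : u ∈ V₁) (hv2 : v ∈ V₂) (huv : G.Adj u v)
    (hmax : ∀ x y, G.mult x y ≤ G.mult u v)
    (hW : ∀ w, w ≠ u → w ≠ v → (∀ x, G.Adj w x → x = u ∨ x = v) → w ∈ V₂) :
    (∃ F : G.EdgeSub, G.IsRestrictedEdgeCut F) ∧ G.rEdgeConn ≤ G.minEdgeDegree := by
  classical
  obtain ⟨hdisj, huniv, hadj⟩ := hbip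
  have hAdjsymm : ∀ a b, G.Adj a b → G.Adj b a := by
    intro a b h; rwa [Multigraph.Adj, G.symm]
  have hne : u ≠ v := by
    rintro rfl
    exact absurd huv (by simp [Multigraph.Adj, G.loopless])
  set W : Finset V :=
    Finset.univ.filter (fun w => w ≠ u ∧ w ≠ v ∧ ∀ x, G.Adj w x → x = u ∨ x = v) with hWdef
  set A : Finset V := insert u (insert v W) with hAdef
  have huA : u ∈ A := mem_insert_self _ _
  have hvA : v ∈ A := mem_insert_of_mem (mem_insert_self _ _)
  have hWmem : ∀ w ∈ W, w ≠ u ∧ w ≠ v ∧ ∀ x, G.Adj w x → x = u ∨ x = v := by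
    intro w hw
    simpa [hWdef] using hw
  have hWA : ∀ w ∈ W, w ∈ A := fun w hw => mem_insert_of_mem (mem_insert_of_mem hw)
  have hAmem : ∀ a ∈ A, a = u ∨ a = v ∨ a ∈ W := by
    intro a ha
    rcases mem_insert.1 ha with h | h
    · exact Or.inl h
    · rcases mem_insert.1 h with h | h
      · exact Or.inr (Or.inl h)
      · exact Or.inr (Or.inr h)
  have hAc : ∀ z, z ∉ A → z ≠ u ∧ z ≠ v ∧ ∃ x, G.Adj z x ∧ x ≠ u ∧ x ≠ v := by
    intro z hz
    have h1 : z ≠ u := fun h => hz (h ▸ huA)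
    have h2 : z ≠ v := fun h => hz (h ▸ hvA)
    refine ⟨h1, h2, ?_⟩
    by_contra h
    push_neg at h
    refine hz (hWA z ?_)
    simp only [hWdef, mem_filter, mem_univ, true_and]
    refine ⟨h1, h2, fun x hx => ?_⟩
    by_contra hc
    push_neg at hc
    exact absurd (h x hx hc.1) hc.2
  have hWV2 : ∀ w ∈ W, w ∈ V₂ := by
    intro w hw
    obtain ⟨h1, h2, h3⟩ := hWmem w hw
    exact hW w h1 h2 h3
  have hWonly : ∀ w ∈ W, ∀ z, z ≠ u → G.mult w z = 0 := by
    intro w hw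
    exact aux_pendant G V₁ V₂ hdisj hadj u v w hv2 (hWV2 w hw) (hWmem w hw).2.2
  -- a vertex outside A
  have hx1 : ∃ x₁, x₁ ∉ A := by
    push_neg at hstar
    obtain ⟨x, y, hxy, hx, hy⟩ := hstar u
    have hmemun : ∀ t : V, t ∈ V₁ ∨ t ∈ V₂ := by
      intro t
      have : t ∈ V₁ ∪ V₂ := huniv ▸ mem_univ t
      exact mem_union.1 this
    have : ∃ x₁, x₁ ∈ V₁ ∧ x₁ ≠ u := by
      rcases hmemun x with h | h
      · exact ⟨x, h, hx⟩
      · exact ⟨y, (hadj y x (hAdjsymm _ _ hxy)).2 h, hy⟩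
    obtain ⟨x₁, hx₁V, hx₁u⟩ := this
    refine ⟨x₁, fun hmem => ?_⟩
    rcases hAmem x₁ hmem with h | h | h
    · exact hx₁u h
    · exact Finset.disjoint_left.1 hdisj hx₁V (h ▸ hv2)
    · exact Finset.disjoint_left.1 hdisj hx₁V (hWV2 _ h)
  obtain ⟨x₁, hx₁⟩ := hx1
  -- boundary A is a restricted edge-cut
  have hnoiso : ∀ z, ∃ y, (G.deleteEdges (G.boundary A)).Adj z y := by
    intro z
    by_cases hz : z ∈ A
    · rcases hAmem z hz with rfl | rfl | hzW
      · exact ⟨v, (aux_adj_delete G A _ _).2 ⟨huv, by simp [huA, hvA]⟩⟩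
      · exact ⟨u, (aux_adj_delete G A _ _).2 ⟨hAdjsymm _ _ huv, by simp [huA, hvA]⟩⟩
      · obtain ⟨n, hn⟩ := aux_exists_adj G hG (by omega) z
        have hnA : n ∈ A := by
          rcases (hWmem z hzW).2.2 n hn with rfl | rfl
          · exact huA
          · exact hvA
        exact ⟨n, (aux_adj_delete G A _ _).2 ⟨hn, by simp [hz, hnA]⟩⟩
    · obtain ⟨h1, h2, x, hx, hxu, hxv⟩ := hAc z hz
      have hxA : x ∉ A := by
        intro hmem
        rcases hAmem x hmem with h | h | h
        · exact hxu h
        · exact hxv h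
        · rcases (hWmem x h).2.2 z (hAdjsymm _ _ hx) with rfl | rfl
          · exact h1 rfl
          · exact h2 rfl
      exact ⟨x, (aux_adj_delete G A _ _).2 ⟨hx, by simp [hz, hxA]⟩⟩
  have hcut : G.IsEdgeCut (G.boundary A) := by
    rintro ⟨-, hr⟩
    have := aux_reach_delete G A (hr u x₁)
    exact hx₁ (this.1 huA)
  have hrestr : G.IsRestrictedEdgeCut (G.boundary A) := ⟨hcut, hnoiso⟩
  -- the size bound
  have hsplit : ∀ a : V, (∑ z ∈ A, G.mult a z) + (∑ z ∈ Aᶜ, G.mult a z) = G.degree a :=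
    fun a => Finset.sum_add_sum_compl A _
  have hbound : G.cut A + 2 * G.mult u v ≤ d₁ + d₂ := by
    by_cases hWe : W = ∅
    · -- A = {u, v}
      have hA2 : A = {u, v} := by rw [hAdef, hWe]; rfl
      have hcutA : G.cut A = (∑ z ∈ Aᶜ, G.mult u z) + (∑ z ∈ Aᶜ, G.mult v z) := by
        show (∑ a ∈ A, ∑ z ∈ Aᶜ, G.mult a z) = _
        rw [hA2, Finset.sum_insert (by simp [hne]), Finset.sum_singleton]
      have hu' : (∑ z ∈ A, G.mult u z) = G.mult u v := by
        rw [hA2, Finset.sum_insert (by simp [hne]), Finset.sum_singleton]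
        simp [G.loopless]
      have hv' : (∑ z ∈ A, G.mult v z) = G.mult v u := by
        rw [hA2, Finset.sum_insert (by simp [hne]), Finset.sum_singleton]
        simp [G.loopless]
      have e1 := hsplit u
      have e2 := hsplit v
      rw [hu', hd1 u hu1] at e1
      rw [hv', hd2 v hv2] at e2
      have hsymm : G.mult v u = G.mult u v := G.symm v u
      omega
    · obtain ⟨w₀, hw₀⟩ := Finset.nonempty_of_ne_empty hWe
      obtain ⟨hw₀u, hw₀v, hw₀adj⟩ := hWmem w₀ hw₀
      have hw₀V2 : w₀ ∈ V₂ := hWV2 w₀ hw₀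
      have hw₀only := hWonly w₀ hw₀
      have hdw₀ : G.degree w₀ = G.mult w₀ u :=
        Finset.sum_eq_single_of_mem u (mem_univ u) (fun z _ hz => hw₀only z hz)
      have hd₂w : d₂ = G.mult w₀ u := by rw [← hd2 w₀ hw₀V2, hdw₀]
      have hle1 : G.mult w₀ u ≤ G.mult u v := hmax w₀ u
      have hle2 : G.mult v u ≤ G.degree v :=
        Finset.single_le_sum (f := fun z => G.mult v z) (fun i _ => Nat.zero_le _) (mem_univ u)
      have hsymm : G.mult v u = G.mult u v := G.symm v u
      have hdv : G.degree v = d₂ := hd2 v hv2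
      have hmuv : G.mult u v = d₂ := by omega
      -- v has edges only to u
      have hvonly : ∀ z, z ≠ u → G.mult v z = 0 := by
        have hsum : G.mult v u + (∑ z ∈ Finset.univ.erase u, G.mult v z) = G.degree v :=
          Finset.add_sum_erase Finset.univ (fun z => G.mult v z) (mem_univ u)
        have hz : (∑ z ∈ Finset.univ.erase u, G.mult v z) = 0 := by omega
        intro z hzu
        exact (Finset.sum_eq_zero_iff.1 hz) z (Finset.mem_erase.2 ⟨hzu, mem_univ z⟩)
      have hcutA : G.cut A = ∑ z ∈ Aᶜ, G.mult u z := by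
        show (∑ a ∈ A, ∑ z ∈ Aᶜ, G.mult a z) = _
        refine Finset.sum_eq_single_of_mem u huA (fun a ha hau => Finset.sum_eq_zero fun z hz => ?_)
        have hzu : z ≠ u := fun h => (Finset.mem_compl.1 hz) (h ▸ huA)
        rcases hAmem a ha with h | rfl | h
        · exact absurd h hau
        · exact hvonly z hzu
        · exact hWonly a h z hzu
      have hpair : G.mult u v + G.mult u w₀ ≤ ∑ z ∈ A, G.mult u z := by
        have hsub : ({v, w₀} : Finset V) ⊆ A := by
          intro t ht
          rcases Finset.mem_insert.1 ht with rfl | ht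
          · exact hvA
          · exact hWA _ ((Finset.mem_singleton.1 ht) ▸ hw₀)
        calc G.mult u v + G.mult u w₀ = ∑ z ∈ ({v, w₀} : Finset V), G.mult u z := by
              rw [Finset.sum_insert (by simp [Ne.symm hw₀v]), Finset.sum_singleton]
          _ ≤ ∑ z ∈ A, G.mult u z := Finset.sum_le_sum_of_subset hsub
      have e1 := hsplit u
      rw [hd1 u hu1] at e1
      have hw₀symm : G.mult u w₀ = G.mult w₀ u := G.symm u w₀
      omega
  -- conclusion
  have h1 : G.rEdgeConn ≤ G.cut A := by
    apply Nat.sInf_le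
    exact ⟨G.boundary A, hrestr, aux_boundary_card G A⟩
  have h2 : G.cut A ≤ G.minEdgeDegree := by
    apply le_csInf
    · exact ⟨_, u, v, huv, rfl⟩
    · rintro n ⟨x, y, hxy, rfl⟩
      have hdeg : G.degree x + G.degree y = d₁ + d₂ := by
        have hmemun : x ∈ V₁ ∪ V₂ := huniv ▸ mem_univ x
        rcases mem_union.1 hmemun with h | h
        · rw [hd1 x h, hd2 y ((hadj x y hxy).1 h)]
        · rw [hd2 x h, hd1 y ((hadj y x (hAdjsymm _ _ hxy)).2 h)]
          omega
      have := hmax x y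
      omega
  exact ⟨⟨G.boundary A, hrestr⟩, le_trans h1 h2⟩

end Helper3
section Helper4
open Finset

lemma aux_key2 (G : Multigraph V) (V₁ V₂ : Finset V) (d₁ d₂ : ℕ)
    (hbip : G.IsBipartition V₁ V₂)
    (hd1 : ∀ v ∈ V₁, G.degree v = d₁) (hd2 : ∀ v ∈ V₂, G.degree v = d₂)
    (hG : G.Connected) (h4 : 4 ≤ Fintype.card V)
    (hstar : ¬ ∃ c : V, ∀ u v : V, G.Adj u v → u = c ∨ v = c)
    (u v : V) (hu1 : u ∈ V₁) (hv2 : v ∈ V₂) (huv : G.Adj u v)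
    (hmax : ∀ x y, G.mult x y ≤ G.mult u v) :
    (∃ F : G.EdgeSub, G.IsRestrictedEdgeCut F) ∧ G.rEdgeConn ≤ G.minEdgeDegree := by
  classical
  obtain ⟨hdisj, huniv, hadj⟩ := hbip
  have hAdjsymm : ∀ a b, G.Adj a b → G.Adj b a := by
    intro a b h; rwa [Multigraph.Adj, G.symm]
  have hmemun : ∀ t : V, t ∈ V₁ ∨ t ∈ V₂ := fun t =>
    mem_union.1 (huniv ▸ mem_univ t)
  by_cases hW : ∀ w, w ≠ u → w ≠ v → (∀ x, G.Adj w x → x = u ∨ x = v) → w ∈ V₂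
  · exact aux_key G V₁ V₂ d₁ d₂ ⟨hdisj, huniv, hadj⟩ hd1 hd2 hG h4 hstar u v hu1 hv2 huv hmax hW
  · push_neg at hW
    obtain ⟨w₀, hw₀u, hw₀v, hw₀adj, hw₀n2⟩ := hW
    have hw₀1 : w₀ ∈ V₁ := (hmemun w₀).resolve_right hw₀n2
    -- w₀ ∈ V₁ is adjacent only to v
    have hw₀only : ∀ z, z ≠ v → G.mult w₀ z = 0 := by
      intro z hz
      by_contra h
      have hadjwz : G.Adj w₀ z := Nat.pos_of_ne_zero h
      rcases hw₀adj z hadjwz with rfl | rfl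
      · exact absurd ((hadj w₀ z hadjwz).1 hw₀1) (Finset.disjoint_left.1 hdisj hu1)
      · exact hz rfl
    have hdw₀ : G.degree w₀ = G.mult w₀ v :=
      Finset.sum_eq_single_of_mem v (mem_univ v) (fun z _ hz => hw₀only z hz)
    have hle1 : G.mult w₀ v ≤ G.mult u v := hmax w₀ v
    have hle2 : G.mult u v ≤ G.degree u :=
      Finset.single_le_sum (f := fun z => G.mult u z) (fun i _ => Nat.zero_le _) (mem_univ v)
    have hdu : G.degree u = d₁ := hd1 u hu1
    have hdw : G.degree w₀ = d₁ := hd1 w₀ hw₀1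
    have hmuv : G.mult u v = d₁ := by omega
    -- u has edges only to v
    have huonly : ∀ z, z ≠ v → G.mult u z = 0 := by
      have hsum : G.mult u v + (∑ z ∈ Finset.univ.erase v, G.mult u z) = G.degree u :=
        Finset.add_sum_erase Finset.univ (fun z => G.mult u z) (mem_univ v)
      have hz : (∑ z ∈ Finset.univ.erase v, G.mult u z) = 0 := by omega
      intro z hzv
      exact (Finset.sum_eq_zero_iff.1 hz) z (Finset.mem_erase.2 ⟨hzv, mem_univ z⟩)
    -- the swapped hW
    have hbip' : G.IsBipartition V₂ V₁ := by
      refine ⟨hdisj.symm, by rw [union_comm]; exact huniv, fun a b h => ?_⟩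
      constructor
      · intro ha
        exact (hadj b a (hAdjsymm _ _ h)).2 ha
      · intro hb
        exact (hadj b a (hAdjsymm _ _ h)).1 hb
    have hmax' : ∀ x y, G.mult x y ≤ G.mult v u := by
      intro x y; rw [G.symm v u]; exact hmax x y
    have hW' : ∀ w, w ≠ v → w ≠ u → (∀ x, G.Adj w x → x = v ∨ x = u) → w ∈ V₁ := by
      intro w h1 h2 h3
      rcases hmemun w with h | h
      · exact h
      · exfalso
        -- w ∈ V₂ is adjacent only to u, but u's edges all go to v
        obtain ⟨n, hn⟩ := aux_exists_adj G hG (by omega) w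
        have hnu : n = u := by
          rcases h3 n hn with h' | h'
          · exfalso
            rw [h'] at hn
            exact absurd ((hadj w v hn).2 hv2) (Finset.disjoint_right.1 hdisj h)
          · exact h'
        rw [hnu] at hn
        have : G.mult u w = 0 := huonly w h1
        rw [Multigraph.Adj, G.symm, this] at hn
        exact absurd hn (lt_irrefl 0)
    have := aux_key G V₂ V₁ d₂ d₁ hbip' hd2 hd1 hG h4 hstar v u hv2 hu1
      (hAdjsymm _ _ huv) hmax' hW'
    exact this

end Helper4

/-- For a connected semi-regular bipartite multigraph on at least four vertices whose
underlying simple graph is not a star, a restricted edge-cut exists and `λ'(G) ≤ ξ(G)`. -/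
theorem rEdgeConn_le_minEdgeDegree_of_semiRegular (G : Multigraph V) (V₁ V₂ : Finset V)
    (d₁ d₂ : ℕ) (hbip : G.IsBipartition V₁ V₂)
    (hd1 : ∀ v ∈ V₁, G.degree v = d₁) (hd2 : ∀ v ∈ V₂, G.degree v = d₂)
    (hG : G.Connected) (h4 : 4 ≤ Fintype.card V)
    (hstar : ¬ ∃ c : V, ∀ u v : V, G.Adj u v → u = c ∨ v = c) :
    (∃ F : G.EdgeSub, G.IsRestrictedEdgeCut F) ∧ G.rEdgeConn ≤ G.minEdgeDegree := by
  classical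
  have hAdjsymm : ∀ a b, G.Adj a b → G.Adj b a := by
    intro a b h; rwa [Multigraph.Adj, G.symm]
  have hVne : (Finset.univ : Finset (V × V)).Nonempty := by
    have : Nonempty V := hG.1
    exact Finset.univ_nonempty
  obtain ⟨p, -, hp⟩ :=
    Finset.exists_mem_eq_sup Finset.univ hVne (fun p : V × V => G.mult p.1 p.2)
  have hmax : ∀ x y, G.mult x y ≤ G.mult p.1 p.2 := by
    intro x y
    have := Finset.le_sup (f := fun p : V × V => G.mult p.1 p.2)
      (Finset.mem_univ (x, y))
    rwa [hp] at this
  have hpadj : G.Adj p.1 p.2 := by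
    obtain ⟨x⟩ := hG.1
    obtain ⟨y, hy⟩ := aux_exists_adj G hG (by omega) x
    exact lt_of_lt_of_le hy (hmax x y)
  have hmemun : ∀ t : V, t ∈ V₁ ∨ t ∈ V₂ := by
    intro t
    have : t ∈ V₁ ∪ V₂ := hbip.2.1 ▸ Finset.mem_univ t
    exact Finset.mem_union.1 this
  rcases hmemun p.1 with h1 | h1
  · have h2 : p.2 ∈ V₂ := (hbip.2.2 p.1 p.2 hpadj).1 h1
    exact aux_key2 G V₁ V₂ d₁ d₂ hbip hd1 hd2 hG h4 hstar p.1 p.2 h1 h2 hpadj hmax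
  · have h2 : p.2 ∈ V₁ := (hbip.2.2 p.2 p.1 (hAdjsymm _ _ hpadj)).2 h1
    have hmax' : ∀ x y, G.mult x y ≤ G.mult p.2 p.1 := by
      intro x y; rw [G.symm p.2 p.1]; exact hmax x y
    exact aux_key2 G V₁ V₂ d₁ d₂ hbip hd1 hd2 hG h4 hstar p.2 p.1 h2 h1
      (hAdjsymm _ _ hpadj) hmax'
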